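/- arXiv:1704.08478 — 2 statements merged into one kernel-verified Lean document; each statement's English description precedes it below -/
import Mathlib

section
/- Let M be a matroid, (X,Y) a non-modular pair of flats, and suppose there exists a point p in the ground set of M outside cl(X ∪ Y). Set Y₁ = cl(Y ∪ {p}). Then X ∩ Y = X ∩ Y₁ and δ(X, Y₁) = δ(X, Y). -/
open Set

namespace StickyKantor

variable {α : Type*}

/-- The rank of a set in a matroid, as an integer (junk value `0` when infinite). -/
noncomputable def rk (M : Matroid α) (X : Set α) : ℤ :=
  ((⨆ I ∈ {I : Set α | M.Indep I ∧ I ⊆ X}, I.encard).toNat : ℤ)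

/-- The modular defect of a pair of sets. -/
noncomputable def mdefect (M : Matroid α) (X Y : Set α) : ℤ :=
  rk M X + rk M Y - rk M (X ∪ Y) - rk M (X ∩ Y)

/-- A modular pair of sets. -/
def ModularPair (M : Matroid α) (X Y : Set α) : Prop :=
  rk M X + rk M Y = rk M (X ∪ Y) + rk M (X ∩ Y)

/-- `M'` is an extension of `M`: it has a larger ground set and restricts to `M`. -/
def IsExtension (M' M : Matroid α) : Prop :=
  M.E ⊆ M'.E ∧ M = M'.restrict M.E

/-- A point: a rank-1 flat. -/
def IsPoint (M : Matroid α) (p : Set α) : Prop := M.IsFlat p ∧ rk M p = 1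

/-- A line: a rank-2 flat. -/
def IsLine (M : Matroid α) (l : Set α) : Prop := M.IsFlat l ∧ rk M l = 2

/-- A plane: a rank-3 flat. -/
def IsPlane (M : Matroid α) (e : Set α) : Prop := M.IsFlat e ∧ rk M e = 3

/-- Two lines are coplanar if their join has rank at most 3. -/
def Coplanar (M : Matroid α) (l₁ l₂ : Set α) : Prop := rk M (l₁ ∪ l₂) ≤ 3

/-- A hyperplane: a maximal proper flat. -/
def IsHyperplane (M : Matroid α) (H : Set α) : Prop :=
  M.IsFlat H ∧ H ≠ M.E ∧ ∀ F, M.IsFlat F → H ⊂ F → F = M.E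

/-- A matroid is hypermodular if every pair of hyperplanes is a modular pair. -/
def Hypermodular (M : Matroid α) : Prop :=
  ∀ H₁ H₂, IsHyperplane M H₁ → IsHyperplane M H₂ → ModularPair M H₁ H₂

/-- A matroid is modular if every pair of flats is a modular pair. -/
def Modular (M : Matroid α) : Prop :=
  ∀ F₁ F₂, M.IsFlat F₁ → M.IsFlat F₂ → ModularPair M F₁ F₂

/-- A modular cut: an up-closed family of flats closed under intersections of
modular pairs. -/
def IsModularCut (M : Matroid α) (𝓜 : Set (Set α)) : Prop :=
  (∀ F ∈ 𝓜, M.IsFlat F) ∧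
  (∀ F ∈ 𝓜, ∀ F', M.IsFlat F' → F ⊆ F' → F' ∈ 𝓜) ∧
  (∀ F₁ ∈ 𝓜, ∀ F₂ ∈ 𝓜, ModularPair M F₁ F₂ → F₁ ∩ F₂ ∈ 𝓜)

/-- The principal modular cut of a flat `F`. -/
def principalCut (M : Matroid α) (F : Set α) : Set (Set α) :=
  {G | M.IsFlat G ∧ F ⊆ G}

/-- The modular cut generated by a family of flats. -/
def genCut (M : Matroid α) (A : Set (Set α)) : Set (Set α) :=
  ⋂₀ {𝓜 | IsModularCut M 𝓜 ∧ A ⊆ 𝓜}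

/-- A non-modular pair of flats is intersectable if the modular cut it generates is
not the principal modular cut of its intersection. -/
def Intersectable (M : Matroid α) (X Y : Set α) : Prop :=
  genCut M {X, Y} ≠ principalCut M (X ∩ Y)

/-- A matroid is OTE (only trivially extendable) if every nonempty modular cut
is principal. -/
def OTE (M : Matroid α) : Prop :=
  ∀ 𝓜, IsModularCut M 𝓜 → 𝓜 ≠ ∅ → ∃ F, M.IsFlat F ∧ 𝓜 = principalCut M F

/-- A matroid is sticky if every pair of extensions meeting exactly in its ground set
has an amalgam. -/
def Sticky (M : Matroid α) : Prop :=
  ∀ N₁ N₂ : Matroid α, IsExtension N₁ M → IsExtension N₂ M → N₁.E ∩ N₂.E = M.E →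
    ∃ A : Matroid α, A.E = N₁.E ∪ N₂.E ∧ IsExtension A N₁ ∧ IsExtension A N₂

/-- The function `η` of the amalgam construction. -/
noncomputable def eta (M M₁ M₂ : Matroid α) (X : Set α) : ℤ :=
  rk M₁ (X ∩ M₁.E) + rk M₂ (X ∩ M₂.E) - rk M (X ∩ M.E)

/-- The function `ξ` of the amalgam construction. -/
noncomputable def xi (M M₁ M₂ : Matroid α) (X : Set α) : ℤ :=
  sInf {n : ℤ | ∃ Y, X ⊆ Y ∧ Y ⊆ M₁.E ∪ M₂.E ∧ n = eta M M₁ M₂ Y}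

/-- The lattice `𝓛(M₁,M₂)` of sets whose traces on both ground sets are flats. -/
def latticeL (M₁ M₂ : Matroid α) : Set (Set α) :=
  {X | X ⊆ M₁.E ∪ M₂.E ∧ M₁.IsFlat (X ∩ M₁.E) ∧ M₂.IsFlat (X ∩ M₂.E)}

lemma rk_eq_of_basis' {M : Matroid α} {I X : Set α} (hI : M.IsBasis' I X) :
    rk M X = (I.encard.toNat : ℤ) := by
  have h : (⨆ J ∈ {J : Set α | M.Indep J ∧ J ⊆ X}, J.encard) = I.encard := by
    apply le_antisymm
    · refine iSup₂_le fun J hJ => ?_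
      by_contra hlt
      push_neg at hlt
      obtain ⟨e, he, hind⟩ := hI.indep.augment hJ.1 hlt
      have hsub := hI.2 (y := insert e I)
        ⟨hind, insert_subset (hJ.2 he.1) hI.1.2⟩ (subset_insert _ _)
      exact he.2 (hsub (mem_insert _ _))
    · exact le_iSup₂ (f := fun (J : Set α) (_ : J ∈ {J : Set α | M.Indep J ∧ J ⊆ X}) =>
        J.encard) I ⟨hI.indep, hI.1.2⟩
  rw [rk, h]

lemma rk_closure (M : Matroid α) (X : Set α) : rk M (M.closure X) = rk M X := by
  obtain ⟨I, hI⟩ := M.exists_isBasis' X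
  rw [rk_eq_of_basis' hI, rk_eq_of_basis' hI.isBasis_closure_right.isBasis']

lemma rk_insert_of_not_mem_closure (M : Matroid α) [M.RankFinite] {Z : Set α} {p : α}
    (hZE : Z ⊆ M.E) (hpE : p ∈ M.E) (hp : p ∉ M.closure Z) :
    rk M (insert p Z) = rk M Z + 1 := by
  obtain ⟨I, hI⟩ := M.exists_isBasis Z hZE
  have hpI : p ∉ M.closure I := by rwa [hI.closure_eq_closure]
  have hpnotI : p ∉ I := fun h => hpI (M.subset_closure I hI.indep.subset_ground h)
  have hind : M.Indep (insert p I) := by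
    rw [hI.indep.insert_indep_iff_of_notMem hpnotI]
    exact ⟨hpE, hpI⟩
  have hbas : M.IsBasis (insert p I) (insert p Z) := hI.insert_isBasis_insert hind
  rw [rk_eq_of_basis' hI.isBasis', rk_eq_of_basis' hbas.isBasis',
    Set.encard_insert_of_notMem hpnotI,
    ENat.toNat_add hI.indep.finite.encard_lt_top.ne (by simp)]
  simp [add_comm]

/-- enlarging `Y` by a point outside `cl(X ∪ Y)` preserves the
intersection with `X` and the modular defect. -/
theorem defect_invariant_point_outside (M : Matroid α) [M.RankFinite]
    (X Y : Set α) (hX : M.IsFlat X) (hY : M.IsFlat Y) (hnm : 0 < mdefect M X Y)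
    (p : α) (hp : p ∈ M.E \ M.closure (X ∪ Y)) :
    X ∩ Y = X ∩ M.closure (Y ∪ {p}) ∧
      mdefect M X (M.closure (Y ∪ {p})) = mdefect M X Y := by
  obtain ⟨hpE, hpcl⟩ := hp
  have hXE : X ⊆ M.E := hX.subset_ground
  have hYE : Y ⊆ M.E := hY.subset_ground
  have hYpE : Y ∪ {p} ⊆ M.E := union_subset hYE (singleton_subset_iff.mpr hpE)
  have hXYE : X ∪ Y ⊆ M.E := union_subset hXE hYE
  -- Part 1: intersections agree
  have h1 : X ∩ Y = X ∩ M.closure (Y ∪ {p}) := by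
    apply subset_antisymm
    · exact inter_subset_inter_right _
        ((subset_union_left.trans (M.subset_closure _ hYpE)))
    · rintro x ⟨hxX, hxcl⟩
      refine ⟨hxX, ?_⟩
      by_contra hxY
      have hxY' : x ∉ M.closure Y := by rwa [hY.closure]
      have hx' : x ∈ M.closure (insert p Y) \ M.closure Y := by
        rw [union_singleton] at hxcl
        exact ⟨hxcl, hxY'⟩
      have hpx := Matroid.closure_exchange hx'
      have : p ∈ M.closure (X ∪ Y) :=
        M.closure_mono (insert_subset (Or.inl hxX) subset_union_right) hpx.1
      exact hpcl this
  refine ⟨h1, ?_⟩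
  -- p is not in the closure of Y
  have hpY : p ∉ M.closure Y :=
    fun h => hpcl (M.closure_mono subset_union_right h)
  -- rank of Y₁
  have h2 : rk M (M.closure (Y ∪ {p})) = rk M Y + 1 := by
    rw [rk_closure M, union_singleton, rk_insert_of_not_mem_closure M hYE hpE hpY]
  have h3 : rk M (X ∪ M.closure (Y ∪ {p})) = rk M (X ∪ Y) + 1 := by
    have hcl : M.closure (X ∪ M.closure (Y ∪ {p})) = M.closure (insert p (X ∪ Y)) := by
      rw [Matroid.closure_union_closure_right_eq]
      rw [union_singleton, union_insert]
    calc rk M (X ∪ M.closure (Y ∪ {p}))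
        = rk M (M.closure (X ∪ M.closure (Y ∪ {p}))) := (rk_closure M _).symm
      _ = rk M (M.closure (insert p (X ∪ Y))) := by rw [hcl]
      _ = rk M (insert p (X ∪ Y)) := rk_closure M _
      _ = rk M (X ∪ Y) + 1 := rk_insert_of_not_mem_closure M hXYE hpE hpcl
  simp only [mdefect, ← h1, h2, h3]
  ring
end StickyKantor
end

section
/- Let M be a hypermodular rank-4 matroid on ground set E and suppose Γ is a set of pairwise coplanar, pairwise disjoint lines partitioning E, containing the disjoint coplanar lines l₁ and l₂. Then the collection 𝓜 of all flats of M that contain some line of Γ is a modular cut of M, and the corresponding single-element extension M +_𝓜 p makes l₁ and l₂ intersect in the new point p. -/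
open Set

namespace StickyKantor

variable {α : Type*}

section RankAPI

variable {M : Matroid α} {I J X Y F F' : Set α} {e x : α}

lemma encard_le_of_basis' (hJ : M.IsBasis' J X) (hI : M.Indep I) (hIX : I ⊆ X) :
    I.encard ≤ J.encard := by
  by_contra hlt
  push_neg at hlt
  obtain ⟨e, he, hind⟩ := hJ.indep.augment hI hlt
  have := hJ.eq_of_subset_indep hind (subset_insert _ _)
    (insert_subset (hIX he.1) hJ.subset)
  exact he.2 (this ▸ mem_insert _ _)

lemma rk_eq_ncard_basis' [M.RankFinite] (hJ : M.IsBasis' J X) : rk M X = J.ncard := by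
  have hsup : (⨆ I ∈ {I : Set α | M.Indep I ∧ I ⊆ X}, I.encard) = J.encard := by
    refine le_antisymm (iSup₂_le fun I hI => encard_le_of_basis' hJ hI.1 hI.2) ?_
    exact le_iSup₂_of_le J ⟨hJ.indep, hJ.subset⟩ le_rfl
  rw [rk, hsup, ← Set.ncard_def]

lemma rk_eq_ncard_basis [M.RankFinite] (hJ : M.IsBasis J X) : rk M X = J.ncard :=
  rk_eq_ncard_basis' hJ.isBasis'

lemma rk_indep [M.RankFinite] (hI : M.Indep I) : rk M I = I.ncard :=
  rk_eq_ncard_basis hI.isBasis_self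

lemma rk_empty [M.RankFinite] : rk M (∅ : Set α) = 0 := by
  simpa using rk_indep M.empty_indep

lemma ncard_le_rk [M.RankFinite] (hI : M.Indep I) (hIX : I ⊆ X) : (I.ncard : ℤ) ≤ rk M X := by
  obtain ⟨J, hJ⟩ := M.exists_isBasis' X
  rw [rk_eq_ncard_basis' hJ]
  have h := encard_le_of_basis' hJ hI hIX
  rw [← hI.finite.cast_ncard_eq, ← hJ.indep.finite.cast_ncard_eq, Nat.cast_le] at h
  exact_mod_cast h

lemma rk_mono [M.RankFinite] (hXY : X ⊆ Y) : rk M X ≤ rk M Y := by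
  obtain ⟨J, hJ⟩ := M.exists_isBasis' X
  rw [rk_eq_ncard_basis' hJ]
  exact ncard_le_rk hJ.indep (hJ.subset.trans hXY)

lemma rk_nonneg (M : Matroid α) (X : Set α) : 0 ≤ rk M X := Int.ofNat_nonneg _

lemma rk_closure_eq [M.RankFinite] (X : Set α) : rk M (M.closure X) = rk M X := by
  obtain ⟨J, hJ⟩ := M.exists_isBasis' X
  have h1 : M.IsBasis J (M.closure X) := by
    have := hJ.isBasis_inter_ground.isBasis_closure_right
    rwa [Matroid.closure_inter_ground] at this
  rw [rk_eq_ncard_basis h1, rk_eq_ncard_basis' hJ]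

lemma nonempty_of_rk_pos [M.RankFinite] (h : 0 < rk M X) : X.Nonempty := by
  rcases X.eq_empty_or_nonempty with rfl | hne
  · rw [rk_empty] at h; omega
  · exact hne

lemma rk_insert_of_not_mem_closure_s9 [M.RankFinite] (hX : X ⊆ M.E) (he : e ∈ M.E)
    (hecl : e ∉ M.closure X) : rk M (insert e X) = rk M X + 1 := by
  obtain ⟨J, hJ⟩ := M.exists_isBasis X hX
  have heJ : e ∉ J := fun h => hecl (M.subset_closure X hX (hJ.subset h))
  have hind : M.Indep (insert e J) := by
    rw [hJ.indep.insert_indep_iff_of_notMem heJ, hJ.closure_eq_closure]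
    exact ⟨he, hecl⟩
  rw [rk_eq_ncard_basis (hJ.insert_isBasis_insert hind), rk_eq_ncard_basis hJ,
    Set.ncard_insert_of_notMem heJ hJ.indep.finite]
  push_cast; ring

lemma flat_closure (M : Matroid α) (X : Set α) : M.IsFlat (M.closure X) := by
  have hne : Nonempty {F // F ∈ {F | M.IsFlat F ∧ X ∩ M.E ⊆ F}} :=
    ⟨⟨M.E, M.ground_isFlat, inter_subset_right⟩⟩
  rw [Matroid.closure_def, sInter_eq_iInter]
  exact Matroid.IsFlat.iInter fun F => F.2.1

lemma rk_lt_of_flat_ssubset [M.RankFinite] (hF : M.IsFlat F) (hF' : M.IsFlat F') (h : F ⊂ F') :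
    rk M F + 1 ≤ rk M F' := by
  obtain ⟨x, hxF', hxF⟩ := exists_of_ssubset h
  have : rk M (insert x F) = rk M F + 1 :=
    rk_insert_of_not_mem_closure_s9 hF.subset_ground (hF'.subset_ground hxF')
      (by rwa [hF.closure])
  rw [← this]
  exact rk_mono (insert_subset hxF' h.subset)

lemma flat_eq_of_subset_of_rk_le [M.RankFinite] (hF : M.IsFlat F) (hF' : M.IsFlat F')
    (hss : F ⊆ F') (hrk : rk M F' ≤ rk M F) : F = F' := by
  by_contra hne
  have := rk_lt_of_flat_ssubset hF hF' (hss.ssubset_of_ne hne)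
  omega

lemma flat_eq_ground [M.RankFinite] (hF : M.IsFlat F) (h : rk M M.E ≤ rk M F) : F = M.E :=
  flat_eq_of_subset_of_rk_le hF M.ground_isFlat hF.subset_ground h

lemma flat_inter (M : Matroid α) (h₁ : M.IsFlat F) (h₂ : M.IsFlat F') : M.IsFlat (F ∩ F') := by
  rw [Set.inter_eq_iInter]
  exact Matroid.IsFlat.iInter fun b => by cases b <;> simpa

end RankAPI
section Geometry

variable {M : Matroid α} {F F' l l'' lx : Set α} {x : α}

lemma plane_hyperplane [M.RankFinite] (hrank : rk M M.E = 4) (hF : M.IsFlat F)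
    (h3 : rk M F = 3) : IsHyperplane M F := by
  refine ⟨hF, fun hFE => by rw [hFE, hrank] at h3; omega, fun G hG hss => ?_⟩
  have h1 := rk_lt_of_flat_ssubset hF hG hss
  have h2 : rk M G ≤ rk M M.E := rk_mono hG.subset_ground
  exact flat_eq_ground hG (by omega)

lemma rk_union_planes [M.RankFinite] (hrank : rk M M.E = 4) (hF : M.IsFlat F)
    (hF' : M.IsFlat F') (h3 : rk M F = 3) (h3' : rk M F' = 3) (hne : F ≠ F') :
    rk M (F ∪ F') = 4 := by
  have hnss : ¬ F' ⊆ F := fun h => hne (flat_eq_of_subset_of_rk_le hF' hF h (by omega)).symm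
  obtain ⟨x, hxF', hxF⟩ := not_subset.1 hnss
  have h1 : rk M (insert x F) = 4 := by
    rw [rk_insert_of_not_mem_closure_s9 hF.subset_ground (hF'.subset_ground hxF')
      (by rwa [hF.closure]), h3]
    norm_num
  have hge : rk M (insert x F) ≤ rk M (F ∪ F') :=
    rk_mono (insert_subset (Or.inr hxF') subset_union_left)
  have hle : rk M (F ∪ F') ≤ rk M M.E :=
    rk_mono (union_subset hF.subset_ground hF'.subset_ground)
  omega

lemma line_absorb [M.RankFinite] (hhm : Hypermodular M) (hrank : rk M M.E = 4)
    (hlinel : IsLine M l) (hlinel'' : IsLine M l'') (hd : l ∩ l'' = ∅)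
    (hcop : Coplanar M l l'') (hF : M.IsFlat F) (h3 : rk M F = 3) (hl''F : l'' ⊆ F)
    (hx : x ∈ l) (hxF : x ∈ F) : l ⊆ F := by
  obtain ⟨hlf, hl2⟩ := hlinel
  obtain ⟨hl''f, hl''2⟩ := hlinel''
  have hxl'' : x ∉ l'' := fun h => by
    have : x ∈ l ∩ l'' := ⟨hx, h⟩
    rw [hd] at this; exact this
  have hxE : x ∈ M.E := hF.subset_ground hxF
  have h3' : rk M (insert x l'') = 3 := by
    rw [rk_insert_of_not_mem_closure_s9 hl''f.subset_ground hxE (by rwa [hl''f.closure]), hl''2]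
    norm_num
  have hPflat := flat_closure M (l ∪ l'')
  have hsub : insert x l'' ⊆ l ∪ l'' := insert_subset (Or.inl hx) subset_union_right
  have hUE : l ∪ l'' ⊆ M.E := union_subset hlf.subset_ground hl''f.subset_ground
  have hcop' : rk M (l ∪ l'') ≤ 3 := hcop
  have hP3 : rk M (M.closure (l ∪ l'')) = 3 := by
    rw [rk_closure_eq]
    have := rk_mono (M := M) hsub
    omega
  by_cases hPF : M.closure (l ∪ l'') = F
  · exact subset_union_left.trans ((M.subset_closure _ hUE).trans hPF.subset)
  · exfalso
    have hmp : rk M (M.closure (l ∪ l'')) + rk M F =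
        rk M (M.closure (l ∪ l'') ∪ F) + rk M (M.closure (l ∪ l'') ∩ F) :=
      hhm _ _ (plane_hyperplane hrank hPflat hP3) (plane_hyperplane hrank hF h3)
    have hu := rk_union_planes hrank hPflat hF hP3 h3 hPF
    have hi : insert x l'' ⊆ M.closure (l ∪ l'') ∩ F :=
      insert_subset ⟨M.subset_closure _ hUE (Or.inl hx), hxF⟩
        (subset_inter (subset_union_right.trans (M.subset_closure _ hUE)) hl''F)
    have hge := rk_mono (M := M) hi
    omega

end Geometry
section Cut

variable {M : Matroid α} {Γ : Set (Set α)} {F F₁ F₂ l l' l'' lx : Set α} {x : α}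

lemma line_absorb' [M.RankFinite] (hhm : Hypermodular M) (hrank : rk M M.E = 4)
    (hlines : ∀ l ∈ Γ, IsLine M l)
    (hpdisj : ∀ l ∈ Γ, ∀ l' ∈ Γ, l ≠ l' → l ∩ l' = ∅)
    (hpcop : ∀ l ∈ Γ, ∀ l' ∈ Γ, Coplanar M l l')
    (hF : M.IsFlat F) (h3 : rk M F = 3) (hl'' : l'' ∈ Γ) (hl''F : l'' ⊆ F)
    (hlx : lx ∈ Γ) (hx : x ∈ lx) (hxF : x ∈ F) : lx ⊆ F := by
  by_cases heq : lx = l''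
  · exact heq ▸ hl''F
  · exact line_absorb hhm hrank (hlines lx hlx) (hlines l'' hl'')
      (hpdisj lx hlx l'' hl'' heq) (hpcop lx hlx l'' hl'') hF h3 hl''F hx hxF

lemma cut_aux [M.RankFinite] (hhm : Hypermodular M) (hrank : rk M M.E = 4)
    (hlines : ∀ l ∈ Γ, IsLine M l)
    (hpdisj : ∀ l ∈ Γ, ∀ l' ∈ Γ, l ≠ l' → l ∩ l' = ∅)
    (hpcop : ∀ l ∈ Γ, ∀ l' ∈ Γ, Coplanar M l l')
    (hpart : ⋃₀ Γ = M.E)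
    (hF₁ : M.IsFlat F₁) (hl : l ∈ Γ) (hlF₁ : l ⊆ F₁)
    (hF₂ : M.IsFlat F₂) (hl' : l' ∈ Γ) (hl'F₂ : l' ⊆ F₂)
    (hmp : ModularPair M F₁ F₂) (hle : rk M F₁ ≤ rk M F₂) :
    F₁ ∩ F₂ ∈ {F | M.IsFlat F ∧ ∃ l ∈ Γ, l ⊆ F} := by
  have hflat := flat_inter M hF₁ hF₂
  have hl2 : rk M l = 2 := (hlines l hl).2
  have hl'2 : rk M l' = 2 := (hlines l' hl').2
  have hr1lb : 2 ≤ rk M F₁ := hl2 ▸ rk_mono hlF₁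
  have hr2lb : 2 ≤ rk M F₂ := hl'2 ▸ rk_mono hl'F₂
  have hr2ub : rk M F₂ ≤ 4 := hrank ▸ rk_mono hF₂.subset_ground
  have hr1ub : rk M F₁ ≤ 4 := hrank ▸ rk_mono hF₁.subset_ground
  have hmp' : rk M F₁ + rk M F₂ = rk M (F₁ ∪ F₂) + rk M (F₁ ∩ F₂) := hmp
  -- case rk F₂ = 4
  by_cases h24 : rk M F₂ = 4
  · have hF₂E : F₂ = M.E := flat_eq_ground hF₂ (by omega)
    rw [hF₂E, inter_eq_left.mpr hF₁.subset_ground]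
    exact ⟨hF₁, l, hl, hlF₁⟩
  -- now rk F₂ = 2 or 3
  by_cases h12 : rk M F₁ = 2
  · -- F₁ = l
    have hF₁l : l = F₁ := flat_eq_of_subset_of_rk_le (hlines l hl).1 hF₁ hlF₁ (by omega)
    by_cases hlsub : l ⊆ F₂
    · rw [← hF₁l, inter_eq_left.mpr hlsub]
      exact ⟨hF₁l ▸ hF₁, l, hl, subset_rfl⟩
    · exfalso
      have hll' : l ≠ l' := fun h => hlsub (h ▸ hl'F₂)
      have hdisj : F₁ ∩ F₂ = ∅ := by
        by_cases h23 : rk M F₂ = 3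
        · by_contra hne
          obtain ⟨y, hy₁, hy₂⟩ := nonempty_iff_ne_empty.2 hne
          exact hlsub (line_absorb' hhm hrank hlines hpdisj hpcop hF₂ h23 hl' hl'F₂
            hl (hF₁l ▸ hy₁) hy₂)
        · -- rk F₂ = 2, F₂ = l'
          have hF₂l' : l' = F₂ := flat_eq_of_subset_of_rk_le (hlines l' hl').1 hF₂ hl'F₂
            (by omega)
          rw [← hF₁l, ← hF₂l']
          exact hpdisj l hl l' hl' hll'
      rw [hdisj, rk_empty] at hmp'
      by_cases h23 : rk M F₂ = 3
      · have : rk M (F₁ ∪ F₂) ≤ 4 :=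
          hrank ▸ rk_mono (union_subset hF₁.subset_ground hF₂.subset_ground)
        omega
      · have hF₂l' : l' = F₂ := flat_eq_of_subset_of_rk_le (hlines l' hl').1 hF₂ hl'F₂
          (by omega)
        have hcop : rk M (l ∪ l') ≤ 3 := hpcop l hl l' hl'
        rw [← hF₁l, ← hF₂l'] at hmp'
        omega
  · -- rk F₁ = 3 = rk F₂
    have h13 : rk M F₁ = 3 := by omega
    have h23 : rk M F₂ = 3 := by omega
    by_cases heq : F₁ = F₂
    · rw [heq, inter_self]; exact ⟨hF₂, l', hl', hl'F₂⟩
    · have hu := rk_union_planes hrank hF₁ hF₂ h13 h23 heq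
      have hri : rk M (F₁ ∩ F₂) = 2 := by omega
      obtain ⟨y, hy⟩ := nonempty_of_rk_pos (M := M) (X := F₁ ∩ F₂) (by omega)
      have hyE : y ∈ M.E := hF₁.subset_ground hy.1
      rw [← hpart] at hyE
      obtain ⟨ly, hly, hyly⟩ := hyE
      refine ⟨hflat, ly, hly, subset_inter ?_ ?_⟩
      · exact line_absorb' hhm hrank hlines hpdisj hpcop hF₁ h13 hl hlF₁ hly hyly hy.1
      · exact line_absorb' hhm hrank hlines hpdisj hpcop hF₂ h23 hl' hl'F₂ hly hyly hy.2

lemma cut_isModularCut [M.RankFinite] (hhm : Hypermodular M) (hrank : rk M M.E = 4)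
    (hlines : ∀ l ∈ Γ, IsLine M l)
    (hpdisj : ∀ l ∈ Γ, ∀ l' ∈ Γ, l ≠ l' → l ∩ l' = ∅)
    (hpcop : ∀ l ∈ Γ, ∀ l' ∈ Γ, Coplanar M l l')
    (hpart : ⋃₀ Γ = M.E) :
    IsModularCut M {F | M.IsFlat F ∧ ∃ l ∈ Γ, l ⊆ F} := by
  refine ⟨fun F hF => hF.1, fun F hF F' hF' hss => ⟨hF', ?_⟩, ?_⟩
  · obtain ⟨-, l, hl, hlF⟩ := hF
    exact ⟨l, hl, hlF.trans hss⟩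
  · rintro F₁ ⟨hF₁, l, hl, hlF₁⟩ F₂ ⟨hF₂, l', hl', hl'F₂⟩ hmp
    rcases le_total (rk M F₁) (rk M F₂) with hle | hle
    · exact cut_aux hhm hrank hlines hpdisj hpcop hpart hF₁ hl hlF₁ hF₂ hl' hl'F₂ hmp hle
    · have hmp2 : ModularPair M F₂ F₁ := by
        have h : rk M F₁ + rk M F₂ = rk M (F₁ ∪ F₂) + rk M (F₁ ∩ F₂) := hmp
        show rk M F₂ + rk M F₁ = rk M (F₂ ∪ F₁) + rk M (F₂ ∩ F₁)
        rw [union_comm, inter_comm]; omega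
      rw [inter_comm]
      exact cut_aux hhm hrank hlines hpdisj hpcop hpart hF₂ hl' hl'F₂ hF₁ hl hlF₁ hmp2 hle

end Cut
section Ext

variable {M : Matroid α} {𝓜 : Set (Set α)} {I J : Set α} {p : α}

lemma indep_encard_le [M.RankFinite] (hrank : rk M M.E = 4) (hI : M.Indep I) :
    I.encard ≤ 4 := by
  obtain ⟨B, hB⟩ := M.exists_isBasis' M.E
  have h4 : (B.ncard : ℤ) = 4 := by rw [← rk_eq_ncard_basis' hB, hrank]
  have hBe : B.encard = 4 := by
    rw [← hB.indep.finite.cast_ncard_eq]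
    exact_mod_cast h4
  exact hBe ▸ encard_le_of_basis' hB hI hI.subset_ground

lemma aug_aux [M.RankFinite] (h𝓜 : IsModularCut M 𝓜)
    (hI : M.Indep I) (hIcl : M.closure I ∉ 𝓜) (hJ : M.Indep J)
    (hcard : I.encard < J.encard)
    (hJcl : J.encard = I.encard + 1 → M.closure J ∉ 𝓜) :
    ∃ x ∈ J \ I, M.Indep (insert x I) ∧ M.closure (insert x I) ∉ 𝓜 := by
  by_contra hcon'
  have hcon : ∀ x ∈ J \ I, M.Indep (insert x I) → M.closure (insert x I) ∈ 𝓜 := by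
    intro x hx hind
    by_contra h
    exact hcon' ⟨x, hx, hind, h⟩
  obtain ⟨x₀, hx₀, hx₀i⟩ := hI.augment hJ hcard
  have hIfin := hI.finite
  have hx₀I : x₀ ∉ I := hx₀.2
  have hF : M.closure (insert x₀ I) ∈ 𝓜 := hcon x₀ hx₀ hx₀i
  have hrkF : rk M (M.closure (insert x₀ I)) = (I.ncard : ℤ) + 1 := by
    rw [rk_closure_eq, rk_indep hx₀i, ncard_insert_of_notMem hx₀I hIfin]
    push_cast; ring
  have hrkI : rk M (M.closure I) = (I.ncard : ℤ) := by rw [rk_closure_eq, rk_indep hI]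
  have hcleq : ∀ w z, w ∉ I → z ∉ I → M.Indep (insert w I) → M.Indep (insert z I) →
      z ∈ M.closure (insert w I) → M.closure (insert z I) = M.closure (insert w I) := by
    intro w z hwI hzI hw hz hzw
    refine flat_eq_of_subset_of_rk_le (flat_closure _ _) (flat_closure _ _) ?_ ?_
    · exact M.closure_subset_closure_of_subset_closure
        (insert_subset hzw ((subset_insert w I).trans (M.subset_closure _ hw.subset_ground)))
    · rw [rk_closure_eq, rk_closure_eq, rk_indep hw, rk_indep hz,
        ncard_insert_of_notMem hwI hIfin, ncard_insert_of_notMem hzI hIfin]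
  by_cases hall : ∀ y ∈ J \ I, M.Indep (insert y I) →
      M.closure (insert y I) = M.closure (insert x₀ I)
  · have hJF : J ⊆ M.closure (insert x₀ I) := by
      intro y hy
      by_cases hyI : y ∈ I
      · exact M.closure_subset_closure (subset_insert _ _)
          (M.subset_closure I hI.subset_ground hyI)
      · by_cases hind : M.Indep (insert y I)
        · rw [← hall y ⟨hy, hyI⟩ hind]
          exact M.subset_closure _ hind.subset_ground (mem_insert y I)
        · have hyE : y ∈ M.E := hJ.subset_ground hy
          have : y ∈ M.closure I := by
            rw [hI.mem_closure_iff]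
            exact Or.inl ⟨hind, insert_subset hyE hI.subset_ground⟩
          exact M.closure_subset_closure (subset_insert _ _) this
    have hclJF : M.closure J ⊆ M.closure (insert x₀ I) :=
      M.closure_subset_closure_of_subset_closure hJF
    have hrkJ : rk M (M.closure J) = (J.ncard : ℤ) := by rw [rk_closure_eq, rk_indep hJ]
    have hmono := rk_mono (M := M) hclJF
    have hncard : I.ncard < J.ncard := by
      rwa [← hIfin.cast_ncard_eq, ← hJ.finite.cast_ncard_eq, Nat.cast_lt] at hcard
    have hJn : J.ncard = I.ncard + 1 := by omega
    have hJen : J.encard = I.encard + 1 := by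
      rw [← hIfin.cast_ncard_eq, ← hJ.finite.cast_ncard_eq, hJn]
      push_cast; ring
    have heqF : M.closure J = M.closure (insert x₀ I) :=
      flat_eq_of_subset_of_rk_le (flat_closure _ _) (flat_closure _ _) hclJF (by omega)
    exact hJcl hJen (heqF ▸ hF)
  · push_neg at hall
    obtain ⟨y, hy, hyind, hyne⟩ := hall
    have hyI : y ∉ I := hy.2
    have hG : M.closure (insert y I) ∈ 𝓜 := hcon y hy hyind
    have hyF : y ∉ M.closure (insert x₀ I) := fun hmem =>
      hyne (hcleq x₀ y hx₀I hyI hx₀i hyind hmem)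
    have hyx₀I : y ∉ insert x₀ I := fun h => hyF (M.subset_closure _ hx₀i.subset_ground h)
    have hK : M.Indep (insert y (insert x₀ I)) := by
      rw [hx₀i.insert_indep_iff_of_notMem hyx₀I]
      exact ⟨hJ.subset_ground hy.1, hyF⟩
    have hIF : M.closure I ⊆ M.closure (insert x₀ I) := M.closure_subset_closure (subset_insert _ _)
    have hIG : M.closure I ⊆ M.closure (insert y I) := M.closure_subset_closure (subset_insert _ _)
    have hinter : M.closure (insert x₀ I) ∩ M.closure (insert y I) = M.closure I := by
      refine subset_antisymm ?_ (subset_inter hIF hIG)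
      rintro z ⟨hzF, hzG⟩
      by_contra hzI
      have hzE : z ∈ M.E := M.closure_subset_ground _ hzF
      have hzIr : z ∉ I := fun h => hzI (M.subset_closure I hI.subset_ground h)
      have hzind : M.Indep (insert z I) := by
        rw [hI.insert_indep_iff_of_notMem hzIr]
        exact ⟨hzE, fun hc => hzI hc⟩
      have h1 := hcleq x₀ z hx₀I hzIr hx₀i hzind hzF
      have h2 := hcleq y z hyI hzIr hyind hzind hzG
      exact hyne (h2.symm.trans h1)
    have hKn : (insert y (insert x₀ I)).ncard = I.ncard + 2 := by
      rw [ncard_insert_of_notMem hyx₀I (hIfin.insert _), ncard_insert_of_notMem hx₀I hIfin]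
    have hKsub : insert y (insert x₀ I) ⊆
        M.closure (insert x₀ I) ∪ M.closure (insert y I) := by
      intro w hw
      rcases hw with rfl | hw
      · exact Or.inr (M.subset_closure _ hyind.subset_ground (mem_insert _ _))
      · exact Or.inl (M.subset_closure _ hx₀i.subset_ground hw)
    have hge : (I.ncard : ℤ) + 2 ≤ rk M (M.closure (insert x₀ I) ∪ M.closure (insert y I)) := by
      have h := ncard_le_rk hK hKsub
      rw [hKn] at h
      push_cast at h
      omega
    have hle : rk M (M.closure (insert x₀ I) ∪ M.closure (insert y I)) ≤ (I.ncard : ℤ) + 2 := by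
      have hsub2 : M.closure (insert x₀ I) ∪ M.closure (insert y I) ⊆
          M.closure (insert y (insert x₀ I)) := by
        apply union_subset
        · exact M.closure_subset_closure (subset_insert _ _)
        · exact M.closure_subset_closure (insert_subset_insert (subset_insert _ _))
      have h := rk_mono (M := M) hsub2
      rw [rk_closure_eq, rk_indep hK, hKn] at h
      push_cast at h
      omega
    have hrkG : rk M (M.closure (insert y I)) = (I.ncard : ℤ) + 1 := by
      rw [rk_closure_eq, rk_indep hyind, ncard_insert_of_notMem hyI hIfin]
      push_cast; ring
    have hmp : ModularPair M (M.closure (insert x₀ I)) (M.closure (insert y I)) := by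
      show rk M _ + rk M _ = rk M (_ ∪ _) + rk M (_ ∩ _)
      rw [hinter, hrkI, hrkF, hrkG]
      omega
    have hfin := h𝓜.2.2 _ hF _ hG hmp
    rw [hinter] at hfin
    exact hIcl hfin

end Ext
section Ext2

variable {M : Matroid α} {𝓜 : Set (Set α)} {I J F : Set α} {p : α}

/-- The independence predicate of the extension of `M` by `p` along the modular cut `𝓜`. -/
def ExtIndep (M : Matroid α) (𝓜 : Set (Set α)) (p : α) (I : Set α) : Prop :=
  (p ∉ I ∧ M.Indep I) ∨ (p ∈ I ∧ M.Indep (I \ {p}) ∧ M.closure (I \ {p}) ∉ 𝓜)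

lemma extIndep_empty (M : Matroid α) (𝓜 : Set (Set α)) (p : α) : ExtIndep M 𝓜 p ∅ :=
  Or.inl ⟨notMem_empty p, M.empty_indep⟩

lemma extIndep_subset (h𝓜 : IsModularCut M 𝓜) (hJ : ExtIndep M 𝓜 p J) (hIJ : I ⊆ J) :
    ExtIndep M 𝓜 p I := by
  rcases hJ with ⟨hpJ, hJi⟩ | ⟨hpJ, hJi, hJcl⟩
  · exact Or.inl ⟨fun h => hpJ (hIJ h), hJi.subset hIJ⟩
  · by_cases hpI : p ∈ I
    · refine Or.inr ⟨hpI, hJi.subset (diff_subset_diff_left hIJ), fun hmem => hJcl ?_⟩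
      exact h𝓜.2.1 _ hmem _ (flat_closure M _)
        (M.closure_subset_closure (diff_subset_diff_left hIJ))
    · refine Or.inl ⟨hpI, hJi.subset ?_⟩
      exact subset_diff_singleton hIJ hpI

lemma extIndep_encard_le [M.RankFinite] (hrank : rk M M.E = 4) (hI : ExtIndep M 𝓜 p I) :
    I.encard ≤ 5 := by
  rcases hI with ⟨-, hIi⟩ | ⟨hpI, hIi, -⟩
  · exact (indep_encard_le hrank hIi).trans (by norm_num)
  · have h1 : (I \ {p}).encard + 1 = I.encard := encard_diff_singleton_add_one hpI
    have h2 := indep_encard_le hrank hIi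
    calc I.encard = (I \ {p}).encard + 1 := h1.symm
      _ ≤ 4 + 1 := by exact add_le_add h2 le_rfl
      _ ≤ 5 := by norm_num

lemma extIndep_aug [M.RankFinite] (h𝓜 : IsModularCut M 𝓜) (hp : p ∉ M.E)
    (hI : ExtIndep M 𝓜 p I) (hJ : ExtIndep M 𝓜 p J) (hcard : I.encard < J.encard) :
    ∃ e ∈ J, e ∉ I ∧ ExtIndep M 𝓜 p (insert e I) := by
  have hne : ∀ {x K : Set α}, True := fun {_ _} => trivial
  rcases hI with ⟨hpI, hIi⟩ | ⟨hpI, hIi, hIcl⟩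
  · rcases hJ with ⟨hpJ, hJi⟩ | ⟨hpJ, hJi, hJcl⟩
    · -- p ∉ I, p ∉ J
      obtain ⟨e, he, hei⟩ := hIi.augment hJi hcard
      refine ⟨e, he.1, he.2, Or.inl ⟨?_, hei⟩⟩
      simp only [mem_insert_iff, not_or]
      exact ⟨fun h => hp (h ▸ hJi.subset_ground he.1), hpI⟩
    · -- p ∉ I, p ∈ J
      have hJfin : (J \ {p}).Finite := hJi.finite
      have hJe : (J \ {p}).encard + 1 = J.encard := encard_diff_singleton_add_one hpJ
      have hIle : I.encard ≤ (J \ {p}).encard := by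
        have := hcard
        rw [← hJe] at this
        exact (ENat.lt_add_one_iff hJfin.encard_lt_top.ne).1 this
      by_cases hcl : M.closure I ∈ 𝓜
      · -- find x in J \ {p} augmenting I in M
        have hex : ∃ x ∈ (J \ {p}) \ I, M.Indep (insert x I) := by
          by_contra hno
          push_neg at hno
          have hsub : J \ {p} ⊆ M.closure I := by
            intro y hy
            by_cases hyI : y ∈ I
            · exact M.subset_closure I hIi.subset_ground hyI
            · have hyE : y ∈ M.E := hJi.subset_ground hy
              rw [hIi.mem_closure_iff]
              exact Or.inl ⟨hno y ⟨hy, hyI⟩, insert_subset hyE hIi.subset_ground⟩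
          have hclsub : M.closure (J \ {p}) ⊆ M.closure I :=
            M.closure_subset_closure_of_subset_closure hsub
          have h1 : rk M (M.closure (J \ {p})) = ((J \ {p}).ncard : ℤ) := by
            rw [rk_closure_eq, rk_indep hJi]
          have h2 : rk M (M.closure I) = (I.ncard : ℤ) := by
            rw [rk_closure_eq, rk_indep hIi]
          have hmono := rk_mono (M := M) hclsub
          have hIn : I.ncard ≤ (J \ {p}).ncard := by
            rwa [← hIi.finite.cast_ncard_eq, ← hJfin.cast_ncard_eq, Nat.cast_le] at hIle
          have heq : M.closure (J \ {p}) = M.closure I :=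
            flat_eq_of_subset_of_rk_le (flat_closure _ _) (flat_closure _ _) hclsub (by omega)
          exact hJcl (heq ▸ hcl)
        obtain ⟨x, hx, hxi⟩ := hex
        have hxp : x ≠ p := fun h => hx.1.2 (h ▸ rfl)
        refine ⟨x, hx.1.1, hx.2, Or.inl ⟨?_, hxi⟩⟩
        simp only [mem_insert_iff, not_or]
        exact ⟨fun h => hxp h.symm, hpI⟩
      · -- use p itself
        refine ⟨p, hpJ, hpI, Or.inr ⟨mem_insert _ _, ?_, ?_⟩⟩
        · rwa [insert_diff_self_of_notMem hpI]
        · rwa [insert_diff_self_of_notMem hpI]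
  · -- p ∈ I
    have hIfin : (I \ {p}).Finite := hIi.finite
    have hIe : (I \ {p}).encard + 1 = I.encard := encard_diff_singleton_add_one hpI
    have hkey : ∃ x ∈ (J \ {p}) \ (I \ {p}), M.Indep (insert x (I \ {p})) ∧
        M.closure (insert x (I \ {p})) ∉ 𝓜 := by
      rcases hJ with ⟨hpJ, hJi⟩ | ⟨hpJ, hJi, hJcl⟩
      · -- p ∉ J : J \ {p} = J, and (I\p).encard + 1 < J.encard
        have hJd : J \ {p} = J := by
          rw [diff_singleton_eq_self hpJ]
        rw [hJd]
        apply aug_aux h𝓜 hIi hIcl hJi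
        · calc (I \ {p}).encard ≤ (I \ {p}).encard + 1 := le_self_add
            _ = I.encard := hIe
            _ < J.encard := hcard
        · intro hJen
          exfalso
          have : I.encard < J.encard := hcard
          rw [← hIe, hJen] at this
          exact lt_irrefl _ this
      · -- p ∈ J
        apply aug_aux h𝓜 hIi hIcl hJi
        · have hJe : (J \ {p}).encard + 1 = J.encard := encard_diff_singleton_add_one hpJ
          rw [← hIe, ← hJe] at hcard
          exact lt_of_add_lt_add_right hcard
        · exact fun _ => hJcl
    obtain ⟨x, hx, hxi, hxcl⟩ := hkey
    have hxp : x ≠ p := fun h => hx.1.2 (h ▸ rfl)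
    have hxI : x ∉ I := fun h => hx.2 ⟨h, hxp⟩
    refine ⟨x, hx.1.1, hxI, Or.inr ⟨mem_insert_of_mem _ hpI, ?_, ?_⟩⟩
    · rwa [← insert_diff_singleton_comm hxp]
    · rwa [← insert_diff_singleton_comm hxp]

end Ext2
section Ext3

variable {M : Matroid α} {𝓜 : Set (Set α)} {I J F : Set α} {p : α}

lemma extIndep_subset_ground (hp : p ∉ M.E) (hI : ExtIndep M 𝓜 p I) : I ⊆ insert p M.E := by
  rcases hI with ⟨-, hIi⟩ | ⟨-, hIi, -⟩
  · exact hIi.subset_ground.trans (subset_insert _ _)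
  · intro x hx
    by_cases hxp : x = p
    · exact hxp ▸ mem_insert _ _
    · exact mem_insert_of_mem _ (hIi.subset_ground ⟨hx, hxp⟩)

lemma exists_extension [M.RankFinite] (h𝓜 : IsModularCut M 𝓜) (hrank : rk M M.E = 4)
    (hp : p ∉ M.E) :
    ∃ M' : Matroid α, IsExtension M' M ∧ M'.E = insert p M.E ∧
      ∀ F, M.IsFlat F → (p ∈ M'.closure F ↔ F ∈ 𝓜) := by
  set N := (IndepMatroid.ofBddAugment (insert p M.E) (ExtIndep M 𝓜 p)
    (extIndep_empty M 𝓜 p)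
    (fun I J hJ hIJ => extIndep_subset h𝓜 hJ hIJ)
    (fun I J hI hJ hcard => extIndep_aug h𝓜 hp hI hJ hcard)
    ⟨5, fun I hI => extIndep_encard_le hrank hI⟩
    (fun I hI => extIndep_subset_ground hp hI)).matroid with hN
  have hNE : N.E = insert p M.E := rfl
  have hNI : ∀ I, N.Indep I ↔ ExtIndep M 𝓜 p I := fun I => Iff.rfl
  have hpN : p ∈ N.E := mem_insert _ _
  have hMsub : M.E ⊆ N.E := subset_insert _ _
  have hrestr : M = N.restrict M.E := by
    refine Matroid.ext_indep ?_ ?_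
    · rw [Matroid.restrict_ground_eq]
    · intro I hIsub
      rw [Matroid.restrict_indep_iff, hNI]
      constructor
      · intro hIi
        exact ⟨Or.inl ⟨fun h => hp (hIsub h), hIi⟩, hIsub⟩
      · rintro ⟨(⟨-, hIi⟩ | ⟨hpI, -, -⟩), hsub⟩
        · exact hIi
        · exact absurd (hsub hpI) hp
  refine ⟨N, ⟨hMsub, hrestr⟩, hNE, fun F hF => ?_⟩
  obtain ⟨I, hI⟩ := M.exists_isBasis F hF.subset_ground
  have hIE : I ⊆ M.E := hI.indep.subset_ground
  have hpI : p ∉ I := fun h => hp (hIE h)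
  have hNIi : N.Indep I := (hNI I).mpr (Or.inl ⟨hpI, hI.indep⟩)
  have hIsubN : I ⊆ N.E := hIE.trans hMsub
  have hFsubcl : F ⊆ N.closure I := by
    intro y hy
    by_cases hyI : y ∈ I
    · exact N.subset_closure I hIsubN hyI
    · have hyE : y ∈ M.E := hF.subset_ground hy
      have hyMcl : y ∈ M.closure I := by
        rw [hI.closure_eq_closure, hF.closure]
        exact hy
      have hdep : ¬ M.Indep (insert y I) := by
        intro hind
        rw [hI.indep.insert_indep_iff_of_notMem hyI] at hind
        exact hind.2 hyMcl
      have hdepN : ¬ N.Indep (insert y I) := by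
        rw [hNI]
        rintro (⟨-, hind⟩ | ⟨hpin, -, -⟩)
        · exact hdep hind
        · rcases hpin with h | h
          · exact hp (h ▸ hyE)
          · exact hpI h
      rw [hNIi.mem_closure_iff]
      exact Or.inl ⟨hdepN, insert_subset (hMsub hyE) hIsubN⟩
  have hclFI : N.closure F = N.closure I :=
    subset_antisymm (N.closure_subset_closure_of_subset_closure hFsubcl)
      (N.closure_subset_closure hI.subset)
  have h1 : p ∈ N.closure I ↔ ¬ N.Indep (insert p I) := by
    rw [hNIi.mem_closure_iff, or_iff_left hpI, Matroid.dep_iff]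
    exact ⟨fun h => h.1, fun h => ⟨h, insert_subset hpN hIsubN⟩⟩
  have h2 : N.Indep (insert p I) ↔ M.closure I ∉ 𝓜 := by
    rw [hNI]
    constructor
    · rintro (⟨hpin, -⟩ | ⟨-, -, hcl⟩)
      · exact absurd (mem_insert _ _) hpin
      · rwa [insert_diff_self_of_notMem hpI] at hcl
    · intro hcl
      exact Or.inr ⟨mem_insert _ _,
        by rw [insert_diff_self_of_notMem hpI]; exact hI.indep,
        by rwa [insert_diff_self_of_notMem hpI]⟩
  have hclI : M.closure I = F := by rw [hI.closure_eq_closure, hF.closure]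
  rw [hclFI, h1, h2, hclI, not_not]

end Ext3
/-- flats containing a line of a pairwise-coplanar line partition form a
modular cut, and the corresponding single-element extension makes `l₁` and `l₂`
intersect in the new point. -/
theorem partition_modular_cut (M : Matroid α) [M.RankFinite]
    (hhm : Hypermodular M) (hrank : rk M M.E = 4)
    (l₁ l₂ : Set α) (h₁ : IsLine M l₁) (h₂ : IsLine M l₂)
    (hdisj : l₁ ∩ l₂ = ∅) (hcop : Coplanar M l₁ l₂)
    (Γ : Set (Set α)) (hl₁ : l₁ ∈ Γ) (hl₂ : l₂ ∈ Γ)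
    (hlines : ∀ l ∈ Γ, IsLine M l)
    (hpdisj : ∀ l ∈ Γ, ∀ l' ∈ Γ, l ≠ l' → l ∩ l' = ∅)
    (hpcop : ∀ l ∈ Γ, ∀ l' ∈ Γ, Coplanar M l l')
    (hpart : ⋃₀ Γ = M.E)
    (p : α) (hp : p ∉ M.E) :
    IsModularCut M {F | M.IsFlat F ∧ ∃ l ∈ Γ, l ⊆ F} ∧
      ∃ M' : Matroid α, IsExtension M' M ∧ M'.E = insert p M.E ∧
        (∀ F, M.IsFlat F → (p ∈ M'.closure F ↔ F ∈ {F | M.IsFlat F ∧ ∃ l ∈ Γ, l ⊆ F})) ∧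
        p ∈ M'.closure l₁ ∩ M'.closure l₂ := by
  have h𝓜 := cut_isModularCut hhm hrank hlines hpdisj hpcop hpart
  refine ⟨h𝓜, ?_⟩
  obtain ⟨M', hext, hE, hchar⟩ := exists_extension h𝓜 hrank hp
  refine ⟨M', hext, hE, hchar, ?_, ?_⟩
  · exact (hchar l₁ h₁.1).mpr ⟨h₁.1, l₁, hl₁, subset_rfl⟩
  · exact (hchar l₂ h₂.1).mpr ⟨h₂.1, l₂, hl₂, subset_rfl⟩
end StickyKantor
end
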